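/- Let ‖·‖_X be a continuous quasi-norm on ℝ^d (d ≥ 2), with unit ball B_X = {x : ‖x‖_X ≤ 1} and unit sphere S_X = {x : ‖x‖_X = 1}, and let B_Y ⊆ ℝ^d be the unit ball of a quasi-norm ‖·‖_Y on ℝ^d. For i ∈ {1, …, d} let P_i : ℝ^d → ℝ^d be the orthogonal projection setting the i-th coordinate to zero. Then for every natural number k and every i, the entropy numbers satisfy e_k(P_i(B_X), P_i(B_Y)) ≤ e_k(S_X, B_Y); in particular e_k(S_X, B_Y) ≥ max_{1≤i≤d} e_k(P_i(B_X), P_i(B_Y)). -/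

import Mathlib

open scoped Pointwise BigOperators

/-- A quasi-norm on `ℝ^d`: nonnegative, definite, absolutely homogeneous, and satisfying the
quasi-triangle inequality `‖x + y‖ ≤ C(‖x‖ + ‖y‖)` for some `C ≥ 1`. -/
def IsQuasiNorm {d : ℕ} (f : (Fin d → ℝ) → ℝ) : Prop :=
  (∀ x, 0 ≤ f x) ∧ (∀ x, f x = 0 ↔ x = 0) ∧
  (∀ (l : ℝ) (x), f (l • x) = |l| * f x) ∧
  (∃ C : ℝ, 1 ≤ C ∧ ∀ x y, f (x + y) ≤ C * (f x + f y))

/-- The `ℓ_∞` norm on `ℝ^d`. -/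
noncomputable def supNorm {d : ℕ} (x : Fin d → ℝ) : ℝ :=
  ⨆ i, |x i|

/-- The closed unit ball of `ℓ_∞^d`. -/
def supBall (d : ℕ) : Set (Fin d → ℝ) := {x | supNorm x ≤ 1}

/-- The orthogonal projection of `ℝ^d` onto the hyperplane `{x : x_i = 0}`,
setting the `i`-th coordinate to zero. -/
def proj {d : ℕ} (i : Fin d) (x : Fin d → ℝ) : Fin d → ℝ :=
  Function.update x i 0

/-- The `k`-th (dyadic) entropy number of `K` with respect to the "unit ball" `B`:
the infimum of all `ε > 0` such that `K` can be covered by `2^(k-1)` translates of `ε • B`. -/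
noncomputable def entropyNumber {d : ℕ} (K B : Set (Fin d → ℝ)) (k : ℕ) : ℝ :=
  sInf {ε : ℝ | 0 < ε ∧ ∃ c : Fin (2 ^ (k - 1)) → (Fin d → ℝ),
    K ⊆ ⋃ j, (c j +ᵥ ε • B)}

/-- Monotonicity of a quasi-norm: for `x, y` lying in the same closed orthant
(equivalently `x_j y_j ≥ 0` for all `j`) with `|x_j| ≤ |y_j|` for all `j`, `‖x‖ ≤ ‖y‖`. -/
def IsMonotoneQuasiNorm {d : ℕ} (f : (Fin d → ℝ) → ℝ) : Prop :=
  ∀ x y : Fin d → ℝ, (∀ j, 0 ≤ x j * y j) → (∀ j, |x j| ≤ |y j|) → f x ≤ f y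

lemma proj_add' {d : ℕ} (i : Fin d) (a b : Fin d → ℝ) :
    proj i (a + b) = proj i a + proj i b := by
  funext j
  by_cases h : j = i <;> simp [proj, Function.update_apply, h]

lemma proj_smul' {d : ℕ} (i : Fin d) (t : ℝ) (a : Fin d → ℝ) :
    proj i (t • a) = t • proj i a := by
  funext j
  by_cases h : j = i <;> simp [proj, Function.update_apply, h]

lemma qn_sum' {d : ℕ} {f : (Fin d → ℝ) → ℝ} {C : ℝ} (hC : 1 ≤ C)
    (h0 : ∀ x, 0 ≤ f x) (hz : f 0 = 0)
    (htri : ∀ x y, f (x + y) ≤ C * (f x + f y))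
    (s : Finset (Fin d)) (g : Fin d → (Fin d → ℝ)) :
    f (∑ j ∈ s, g j) ≤ C ^ s.card * ∑ j ∈ s, f (g j) := by
  induction s using Finset.induction_on with
  | empty => simp [hz]
  | @insert a s ha ih =>
    rw [Finset.sum_insert ha, Finset.sum_insert ha, Finset.card_insert_of_notMem ha]
    have h1 : f (g a + ∑ j ∈ s, g j) ≤ C * (f (g a) + f (∑ j ∈ s, g j)) := htri _ _
    have hCpos : 0 < C := lt_of_lt_of_le one_pos hC
    have h2 : f (∑ j ∈ s, g j) ≤ C ^ s.card * ∑ j ∈ s, f (g j) := ih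
    have hpow : (1:ℝ) ≤ C ^ s.card := one_le_pow₀ hC
    have hsum : 0 ≤ ∑ j ∈ s, f (g j) := Finset.sum_nonneg fun j _ => h0 _
    calc f (g a + ∑ j ∈ s, g j) ≤ C * (f (g a) + f (∑ j ∈ s, g j)) := h1
      _ ≤ C * (f (g a) + C ^ s.card * ∑ j ∈ s, f (g j)) := by nlinarith
      _ ≤ C ^ (s.card + 1) * (f (g a) + ∑ j ∈ s, f (g j)) := by
          rw [pow_succ]
          nlinarith [h0 (g a), mul_le_mul_of_nonneg_left hpow (h0 (g a))]

/-- Every point of `P_i(B_X)` is the projection of a point of the unit sphere. -/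
lemma proj_ball_subset_proj_sphere' {d : ℕ} (i : Fin d)
    {nX : (Fin d → ℝ) → ℝ} (hX : IsQuasiNorm nX) (hXc : Continuous nX) :
    proj i '' {x | nX x ≤ 1} ⊆ proj i '' {x | nX x = 1} := by
  obtain ⟨h0, hdef, hhom, C, hC, htri⟩ := hX
  rintro y ⟨x, hx, rfl⟩
  set e : Fin d → ℝ := Pi.single i 1 with he_def
  have he0 : e ≠ 0 := by
    intro h
    have := congrFun h i
    simp [he_def] at this
  have he : 0 < nX e := lt_of_le_of_ne (h0 e) fun h => he0 ((hdef e).mp h.symm)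
  set p : Fin d → ℝ := Function.update x i 0 with hp_def
  have hCpos : (0:ℝ) < C := lt_of_lt_of_le one_pos hC
  set T₀ : ℝ := C * (1 + nX p) / nX e with hT0_def
  have hT0pos : 0 < T₀ := by
    apply div_pos _ he
    nlinarith [h0 p]
  set T : ℝ := max (x i) T₀ with hT_def
  have hupd : ∀ t : ℝ, Function.update x i t = p + t • e := by
    intro t
    funext j
    by_cases h : j = i <;> simp [hp_def, he_def, Function.update_apply, h, Pi.single_apply]
  have hg_cont : Continuous (fun t : ℝ => nX (Function.update x i t)) := by
    apply hXc.comp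
    apply continuous_pi
    intro j
    by_cases h : j = i
    · subst h; simpa [Function.update_apply] using continuous_id'
    · simp only [Function.update_apply, if_neg h]
      exact continuous_const
  have hgT : 1 ≤ nX (Function.update x i T) := by
    have hTge : T₀ ≤ T := le_max_right _ _
    have hTe : nX (T • e) = T * nX e := by
      rw [hhom, abs_of_pos (lt_of_lt_of_le hT0pos hTge)]
    have hsplit : T • e = Function.update x i T + (-1 : ℝ) • p := by
      rw [hupd T, neg_one_smul]; abel
    have h1 : nX (T • e) ≤ C * (nX (Function.update x i T) + nX ((-1 : ℝ) • p)) := by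
      rw [hsplit]; exact htri _ _
    have hneg : nX ((-1:ℝ) • p) = nX p := by rw [hhom]; simp
    rw [hneg] at h1
    have h2 : C * (1 + nX p) = T₀ * nX e := by
      rw [hT0_def, div_mul_cancel₀ _ (ne_of_gt he)]
    have h3 : T₀ * nX e ≤ T * nX e := mul_le_mul_of_nonneg_right hTge (le_of_lt he)
    rw [hTe] at h1
    nlinarith
  have hIcc : (1:ℝ) ∈ Set.Icc (nX (Function.update x i (x i))) (nX (Function.update x i T)) := by
    constructor
    · simpa using hx
    · exact hgT
  have := intermediate_value_Icc (le_max_left (x i) T₀) hg_cont.continuousOn hIcc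
  obtain ⟨t, _, ht⟩ := this
  exact ⟨Function.update x i t, ht, by simp [proj, Function.update_idem]⟩

theorem entropy_sphere_ge_proj (d : ℕ) (hd : 2 ≤ d)
    (nX nY : (Fin d → ℝ) → ℝ)
    (hX : IsQuasiNorm nX) (hXc : Continuous nX) (hY : IsQuasiNorm nY)
    (k : ℕ) (i : Fin d) :
    entropyNumber (proj i '' {x | nX x ≤ 1}) (proj i '' {x | nY x ≤ 1}) k ≤
      entropyNumber {x | nX x = 1} {x | nY x ≤ 1} k := by
  haveI : Nonempty (Fin d) := ⟨⟨0, by omega⟩⟩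
  obtain ⟨hX0, hXdef, hXhom, CX, hCX, hXtri⟩ := hX
  obtain ⟨hY0, hYdef, hYhom, CY, hCY, hYtri⟩ := hY
  set BY : Set (Fin d → ℝ) := {x | nY x ≤ 1} with hBY
  set SX : Set (Fin d → ℝ) := {x | nX x = 1} with hSX
  set SphereSet : Set ℝ := {ε : ℝ | 0 < ε ∧ ∃ c : Fin (2 ^ (k - 1)) → (Fin d → ℝ),
    SX ⊆ ⋃ j, (c j +ᵥ ε • BY)} with hSphereSet
  set ProjSet : Set ℝ := {ε : ℝ | 0 < ε ∧ ∃ c : Fin (2 ^ (k - 1)) → (Fin d → ℝ),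
    proj i '' {x | nX x ≤ 1} ⊆ ⋃ j, (c j +ᵥ ε • (proj i '' BY))} with hProjSet
  -- Step 1: SphereSet ⊆ ProjSet (project a cover)
  have hsub : proj i '' {x | nX x ≤ 1} ⊆ proj i '' SX :=
    proj_ball_subset_proj_sphere' i ⟨hX0, hXdef, hXhom, CX, hCX, hXtri⟩ hXc
  have hsubset : SphereSet ⊆ ProjSet := by
    rintro ε ⟨hε, c, hcov⟩
    refine ⟨hε, fun j => proj i (c j), ?_⟩
    intro y hy
    obtain ⟨x, hxS, rfl⟩ := hsub hy
    have hx := hcov hxS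
    rw [Set.mem_iUnion] at hx ⊢
    obtain ⟨j, hj⟩ := hx
    obtain ⟨b, hb, hbe⟩ := Set.mem_vadd_set.mp hj
    obtain ⟨w, hw, rfl⟩ := Set.mem_smul_set.mp hb
    refine ⟨j, Set.mem_vadd_set.mpr ⟨ε • proj i w, Set.smul_mem_smul_set ⟨w, hw, rfl⟩, ?_⟩⟩
    have : x = c j + ε • w := hbe.symm
    rw [this, proj_add', proj_smul']
    rfl
  -- Step 2: SphereSet is nonempty
  have hnonempty : SphereSet.Nonempty := by
    -- the sphere is bounded : nX x ≥ m ‖x‖ for the sup norm on Fin d → ℝ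
    have hsph : (Metric.sphere (0 : Fin d → ℝ) 1).Nonempty :=
      NormedSpace.sphere_nonempty.mpr zero_le_one
    obtain ⟨x₀, hx₀, hmin⟩ := (isCompact_sphere (0 : Fin d → ℝ) 1).exists_isMinOn hsph
      hXc.continuousOn
    have hx₀ne : x₀ ≠ 0 := by
      intro h
      rw [mem_sphere_zero_iff_norm] at hx₀
      rw [h, norm_zero] at hx₀; norm_num at hx₀
    set m : ℝ := nX x₀ with hm
    have hmpos : 0 < m :=
      lt_of_le_of_ne (hX0 x₀) fun h => hx₀ne ((hXdef x₀).mp h.symm)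
    -- bound on |x j| for x ∈ SX
    have hRbound : ∀ x ∈ SX, ∀ j, |x j| ≤ 1 / m := by
      intro x hx j
      have hxne : x ≠ 0 := by
        intro h
        have : nX x = 0 := (hXdef x).mpr h
        rw [hx] at this; norm_num at this
      have hxnorm : (0:ℝ) < ‖x‖ := norm_pos_iff.mpr hxne
      have hunit : ‖x‖⁻¹ • x ∈ Metric.sphere (0 : Fin d → ℝ) 1 := by
        rw [mem_sphere_zero_iff_norm, norm_smul, norm_inv, norm_norm,
          inv_mul_cancel₀ (ne_of_gt hxnorm)]
      have h1 : m ≤ nX (‖x‖⁻¹ • x) := hmin hunit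
      have h2 : nX (‖x‖⁻¹ • x) = ‖x‖⁻¹ * nX x := by
        rw [hXhom, abs_of_pos (inv_pos.mpr hxnorm)]
      rw [h2, hx, mul_one] at h1
      have hxle : ‖x‖ ≤ 1 / m := by
        rw [le_div_iff₀ hmpos]
        calc ‖x‖ * m ≤ ‖x‖ * ‖x‖⁻¹ := by
              exact mul_le_mul_of_nonneg_left h1 (le_of_lt hxnorm)
          _ = 1 := mul_inv_cancel₀ (ne_of_gt hxnorm)
      calc |x j| = ‖x j‖ := (Real.norm_eq_abs _).symm
        _ ≤ ‖x‖ := norm_le_pi_norm x j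
        _ ≤ 1 / m := hxle
    -- bound nY on SX
    set A : ℝ := CY ^ d * ∑ j : Fin d, (1 / m) * nY (Pi.single j 1) with hA
    have hY_bound : ∀ x ∈ SX, nY x ≤ A := by
      intro x hx
      have hz : nY 0 = 0 := (hYdef 0).mpr rfl
      have h1 : nY (∑ j : Fin d, Pi.single j (x j)) ≤
          CY ^ (Finset.univ : Finset (Fin d)).card * ∑ j : Fin d, nY (Pi.single j (x j)) :=
        qn_sum' hCY hY0 hz hYtri Finset.univ (fun j => Pi.single j (x j))
      rw [Finset.univ_sum_single] at h1
      rw [Finset.card_univ, Fintype.card_fin] at h1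
      have h2 : ∀ j : Fin d, nY (Pi.single j (x j)) ≤ (1 / m) * nY (Pi.single j 1) := by
        intro j
        have : (Pi.single j (x j) : Fin d → ℝ) = x j • (Pi.single j 1 : Fin d → ℝ) := by
          funext l
          by_cases h : l = j <;> simp [Pi.single_apply, h]
        rw [this, hYhom]
        exact mul_le_mul_of_nonneg_right (hRbound x hx j) (hY0 _)
      calc nY x ≤ CY ^ d * ∑ j : Fin d, nY (Pi.single j (x j)) := h1
        _ ≤ CY ^ d * ∑ j : Fin d, (1 / m) * nY (Pi.single j 1) := by
            apply mul_le_mul_of_nonneg_left (Finset.sum_le_sum fun j _ => h2 j)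
            positivity
        _ = A := rfl
    have hA0 : 0 ≤ A := by
      rw [hA]
      apply mul_nonneg (by positivity)
      exact Finset.sum_nonneg fun j _ => mul_nonneg (by positivity) (hY0 _)
    set ε : ℝ := A + 1 with hε_def
    have hεpos : 0 < ε := by linarith
    refine ⟨ε, hεpos, fun _ => 0, ?_⟩
    intro x hx
    rw [Set.mem_iUnion]
    refine ⟨⟨0, Nat.pow_pos (by norm_num)⟩, ?_⟩
    rw [zero_vadd]
    refine Set.mem_smul_set.mpr ⟨ε⁻¹ • x, ?_, smul_inv_smul₀ (ne_of_gt hεpos) x⟩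
    show nY (ε⁻¹ • x) ≤ 1
    rw [hYhom, abs_of_pos (inv_pos.mpr hεpos)]
    have := hY_bound x hx
    rw [inv_mul_le_iff₀ hεpos, mul_one]
    linarith
  -- Step 3 : conclusion
  have hbdd : BddBelow ProjSet := ⟨0, fun ε hε => le_of_lt hε.1⟩
  exact csInf_le_csInf hbdd hnonempty hsubset
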